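/- Let G'=(V,E') be a graph in which every connected component is colorful with respect to a coloring c, and let p = (v₀, v₁, …, v_{2k+1}) be an alternating path in a supergraph G=(V,E) of G': odd-indexed edges (v_{2i}, v_{2i+1}) are in E∖E' and even-indexed edges (v_{2i+1}, v_{2i+2}) are in E'. Let G'' be obtained from G' by removing the path's edges that are in E' and adding the path's edges not in E'. Then every vertex not an endpoint of p has the same degree in G'' as in G', the degree of v₀ increases by one, and the degree of v_{2k+1} increases by one. -/

import Mathlib

open scoped Classical

open Finset

lemma aux_zero {α : Type*} [DecidableEq α] (A : Finset α) :
    ((A \ ∅) ∪ (∅ \ A)).card = A.card := by simp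

lemma aux_one {α : Type*} [DecidableEq α] (A : Finset α) (b : α) (hb : b ∉ A) :
    ((A \ {b}) ∪ ({b} \ A)).card = A.card + 1 := by
  have h1 : A \ {b} = A := by
    rw [Finset.sdiff_singleton_eq_erase, Finset.erase_eq_of_notMem hb]
  have h2 : ({b} : Finset α) \ A = {b} := by
    rw [Finset.sdiff_eq_self_iff_disjoint, Finset.disjoint_singleton_left]
    exact hb
  rw [h1, h2, Finset.card_union_of_disjoint (by simpa using hb), Finset.card_singleton]

lemma aux_two {α : Type*} [DecidableEq α] (A : Finset α) (a b : α) (hab : a ≠ b)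
    (ha : a ∈ A) (hb : b ∉ A) :
    ((A \ {a, b}) ∪ ({a, b} \ A)).card = A.card := by
  have h1 : A \ {a, b} = A.erase a := by
    ext x
    simp only [Finset.mem_sdiff, Finset.mem_insert, Finset.mem_singleton, Finset.mem_erase]
    constructor
    · rintro ⟨hx, h⟩
      exact ⟨fun h' => h (Or.inl h'), hx⟩
    · rintro ⟨hxa, hx⟩
      refine ⟨hx, ?_⟩
      rintro (rfl | rfl)
      · exact hxa rfl
      · exact hb hx
  have h2 : ({a, b} : Finset α) \ A = {b} := by
    ext x
    simp only [Finset.mem_sdiff, Finset.mem_insert, Finset.mem_singleton]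
    constructor
    · rintro ⟨rfl | rfl, hx⟩
      · exact absurd ha hx
      · rfl
    · rintro rfl
      exact ⟨Or.inr rfl, hb⟩
  have hbe : b ∉ A.erase a := fun h => hb (Finset.mem_of_mem_erase h)
  rw [h1, h2, Finset.card_union_of_disjoint (by simpa using hbe), Finset.card_singleton,
    Finset.card_erase_of_mem ha]
  have : 1 ≤ A.card := Finset.card_pos.mpr ⟨a, ha⟩
  omega

theorem stmt13 {V C : Type*} [Fintype V] (G G' : SimpleGraph V) (hsub : G' ≤ G)
    (c : V → C) (hcolorful : ∀ u v : V, G'.Reachable u v → c u = c v → u = v)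
    (k : ℕ) (p : Fin (2*k+1+1) → V) (hinj : Function.Injective p)
    (halt : ∀ i : Fin (2*k+1),
      if (i : ℕ) % 2 = 0
      then G.Adj (p i.castSucc) (p i.succ) ∧ ¬ G'.Adj (p i.castSucc) (p i.succ)
      else G'.Adj (p i.castSucc) (p i.succ)) :
    ∀ pathEdge : V → V → Prop,
      (pathEdge = fun x y => ∃ i : Fin (2*k+1),
        (x = p i.castSucc ∧ y = p i.succ) ∨ (y = p i.castSucc ∧ x = p i.succ)) →
    ∀ G'' : SimpleGraph V,
      (G'' = SimpleGraph.fromRel (fun x y => Xor' (G'.Adj x y) (pathEdge x y))) →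
    (∀ x : V, x ≠ p 0 → x ≠ p (Fin.last (2*k+1)) → G''.degree x = G'.degree x) ∧
      G''.degree (p 0) = G'.degree (p 0) + 1 ∧
      G''.degree (p (Fin.last (2*k+1))) = G'.degree (p (Fin.last (2*k+1))) + 1 := by
  intro pathEdge hPE G'' hG''
  -- symmetry and irreflexivity of pathEdge
  have hPEsymm : ∀ x y, pathEdge x y → pathEdge y x := by
    intro x y h
    rw [hPE] at h ⊢
    obtain ⟨i, h | h⟩ := h
    · exact ⟨i, Or.inr h⟩
    · exact ⟨i, Or.inl h⟩
  have hPEirr : ∀ x, ¬ pathEdge x x := by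
    intro x h
    rw [hPE] at h
    obtain ⟨i, ⟨h1, h2⟩ | ⟨h1, h2⟩⟩ := h <;>
    · have := hinj (h1.symm.trans h2)
      have := congrArg Fin.val this
      simp [Fin.val_succ] at this
  -- adjacency in G''
  have hadj : ∀ x y, G''.Adj x y ↔ Xor' (G'.Adj x y) (pathEdge x y) := by
    intro x y
    rw [hG'', SimpleGraph.fromRel_adj]
    constructor
    · rintro ⟨hne, h | h⟩
      · exact h
      · rcases h with ⟨hg, hp⟩ | ⟨hp, hg⟩
        · exact Or.inl ⟨hg.symm, fun hc => hp (hPEsymm _ _ hc)⟩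
        · exact Or.inr ⟨hPEsymm _ _ hp, fun hc => hg hc.symm⟩
    · intro h
      refine ⟨?_, Or.inl h⟩
      rintro rfl
      rcases h with ⟨hg, _⟩ | ⟨hp, _⟩
      · exact G'.loopless.irrefl _ hg
      · exact hPEirr _ hp
  -- the finset of path-neighbors
  set Px : V → Finset V := fun x => Finset.univ.filter (fun y => pathEdge x y) with hPx
  have hN : ∀ x, G''.neighborFinset x =
      (G'.neighborFinset x \ Px x) ∪ (Px x \ G'.neighborFinset x) := by
    intro x
    ext y
    simp only [SimpleGraph.mem_neighborFinset, hadj, hPx, Finset.mem_union,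
      Finset.mem_sdiff, Finset.mem_filter, Finset.mem_univ, true_and, Xor', Xor]
  have hdeg : ∀ x, G''.degree x =
      ((G'.neighborFinset x \ Px x) ∪ (Px x \ G'.neighborFinset x)).card := by
    intro x
    rw [← SimpleGraph.card_neighborFinset_eq_degree, hN]
  have hdeg' : ∀ x, G'.degree x = (G'.neighborFinset x).card := by
    intro x
    rw [SimpleGraph.card_neighborFinset_eq_degree]
  -- membership in Px for a path vertex
  have hmemPx : ∀ (j : Fin (2*k+1+1)) (y : V), y ∈ Px (p j) ↔
      ∃ i : Fin (2*k+1), (j = i.castSucc ∧ y = p i.succ) ∨ (y = p i.castSucc ∧ j = i.succ) := by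
    intro j y
    simp only [hPx, Finset.mem_filter, Finset.mem_univ, true_and, hPE]
    constructor
    · rintro ⟨i, ⟨h1, h2⟩ | ⟨h1, h2⟩⟩
      · exact ⟨i, Or.inl ⟨hinj h1, h2⟩⟩
      · exact ⟨i, Or.inr ⟨h1, hinj h2⟩⟩
    · rintro ⟨i, ⟨h1, h2⟩ | ⟨h1, h2⟩⟩
      · exact ⟨i, Or.inl ⟨congrArg p h1, h2⟩⟩
      · exact ⟨i, Or.inr ⟨h1, congrArg p h2⟩⟩
  refine ⟨?_, ?_, ?_⟩
  · -- internal or off-path vertices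
    intro x hx0 hxl
    rw [hdeg, hdeg']
    by_cases hxp : ∃ j, x = p j
    · obtain ⟨j, rfl⟩ := hxp
      have hm0 : (j : ℕ) ≠ 0 := by
        intro h
        apply hx0
        congr 1
        exact Fin.ext h
      have hml : (j : ℕ) ≠ 2*k+1 := by
        intro h
        apply hxl
        congr 1
        exact Fin.ext h
      have hjlt : (j : ℕ) < 2*k+2 := j.isLt
      set m : ℕ := (j : ℕ) with hm
      set i₁ : Fin (2*k+1) := ⟨m - 1, by omega⟩ with hi₁
      set i₂ : Fin (2*k+1) := ⟨m, by omega⟩ with hi₂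
      have hji₁ : j = i₁.succ := by
        apply Fin.ext
        simp [hi₁, Fin.val_succ]
        omega
      have hji₂ : j = i₂.castSucc := by
        apply Fin.ext
        simp [hi₂]
        rfl
      -- Px (p j) = {p i₁.castSucc, p i₂.succ}
      have hPxj : Px (p j) = {p i₁.castSucc, p i₂.succ} := by
        ext y
        rw [hmemPx]
        simp only [Finset.mem_insert, Finset.mem_singleton]
        constructor
        · rintro ⟨i, ⟨h1, h2⟩ | ⟨h1, h2⟩⟩
          · have : i = i₂ := by
              apply Fin.ext
              have := congrArg Fin.val h1
              simpa [hi₂] using this.symm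
            right; rw [h2, this]
          · have : i = i₁ := by
              apply Fin.ext
              have := congrArg Fin.val h2
              simp [Fin.val_succ, hi₁] at this ⊢
              omega
            left; rw [h1, this]
        · rintro (rfl | rfl)
          · exact ⟨i₁, Or.inr ⟨rfl, hji₁⟩⟩
          · exact ⟨i₂, Or.inl ⟨hji₂, rfl⟩⟩
      have hv1 : (i₁ : ℕ) = m - 1 := rfl
      have hv2 : (i₂ : ℕ) = m := rfl
      have hne12 : p i₁.castSucc ≠ p i₂.succ := by
        intro h
        have h' := congrArg Fin.val (hinj h)
        rw [Fin.coe_castSucc, Fin.val_succ] at h'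
        omega
      have h1 := halt i₁
      have h2 := halt i₂
      rw [hPxj]
      by_cases hpar : m % 2 = 0
      · -- m even : edge i₁ (odd) in G', edge i₂ (even) not in G'
        have e1 : (i₁ : ℕ) % 2 ≠ 0 := by omega
        have e2 : (i₂ : ℕ) % 2 = 0 := by omega
        rw [if_neg e1] at h1
        rw [if_pos e2] at h2
        refine aux_two _ _ _ hne12 ?_ ?_
        · rw [SimpleGraph.mem_neighborFinset]
          rw [hji₁]
          exact h1.symm
        · rw [SimpleGraph.mem_neighborFinset]
          rw [hji₂]
          exact h2.2
      · -- m odd : edge i₁ (even) not in G', edge i₂ (odd) in G'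
        have e1 : (i₁ : ℕ) % 2 = 0 := by omega
        have e2 : (i₂ : ℕ) % 2 ≠ 0 := by omega
        rw [if_pos e1] at h1
        rw [if_neg e2] at h2
        rw [Finset.pair_comm]
        refine aux_two _ _ _ hne12.symm ?_ ?_
        · rw [SimpleGraph.mem_neighborFinset, hji₂]
          exact h2
        · rw [SimpleGraph.mem_neighborFinset]
          intro hc
          apply h1.2
          rw [hji₁] at hc
          exact hc.symm
    · -- off the path
      have hPxe : Px x = ∅ := by
        ext y
        simp only [hPx, Finset.mem_filter, Finset.mem_univ, true_and,
          Finset.notMem_empty, iff_false, hPE]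
        rintro ⟨i, ⟨h1, _⟩ | ⟨_, h1⟩⟩
        · exact hxp ⟨_, h1⟩
        · exact hxp ⟨_, h1⟩
      rw [hPxe]
      exact aux_zero _
  · -- endpoint p 0
    rw [hdeg, hdeg']
    have hPx0 : Px (p 0) = {p ((0 : Fin (2*k+1)).succ)} := by
      ext y
      rw [hmemPx]
      simp only [Finset.mem_singleton]
      constructor
      · rintro ⟨i, ⟨h1, h2⟩ | ⟨h1, h2⟩⟩
        · have : i = 0 := by
            apply Fin.ext
            have := congrArg Fin.val h1
            simpa using this.symm
          rw [h2, this]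
        · exfalso
          have := congrArg Fin.val h2
          simp [Fin.val_succ] at this
      · rintro rfl
        exact ⟨0, Or.inl ⟨by simp [Fin.ext_iff], rfl⟩⟩
    rw [hPx0]
    have h0 := halt 0
    rw [if_pos (by simp)] at h0
    refine aux_one _ _ ?_
    rw [SimpleGraph.mem_neighborFinset]
    intro hc
    apply h0.2
    have : ((0 : Fin (2*k+1)).castSucc) = (0 : Fin (2*k+1+1)) := by
      simp [Fin.ext_iff]
    rw [this]
    exact hc
  · -- endpoint p (last)
    rw [hdeg, hdeg']
    set il : Fin (2*k+1) := ⟨2*k, by omega⟩ with hil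
    have hlast : (Fin.last (2*k+1)) = il.succ := by
      apply Fin.ext
      simp [hil, Fin.val_succ]
    have hPxl : Px (p (Fin.last (2*k+1))) = {p il.castSucc} := by
      ext y
      rw [hmemPx]
      simp only [Finset.mem_singleton]
      constructor
      · rintro ⟨i, ⟨h1, h2⟩ | ⟨h1, h2⟩⟩
        · exfalso
          have := congrArg Fin.val h1
          simp [Fin.val_last] at this
          omega
        · have : i = il := by
            apply Fin.ext
            have := congrArg Fin.val h2
            simp [Fin.val_succ, Fin.val_last, hil] at this ⊢
            omega
          rw [h1, this]
      · rintro rfl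
        exact ⟨il, Or.inr ⟨rfl, hlast⟩⟩
    rw [hPxl]
    have hl := halt il
    rw [if_pos (by have : (il : ℕ) = 2*k := rfl; omega)] at hl
    refine aux_one _ _ ?_
    rw [SimpleGraph.mem_neighborFinset]
    intro hc
    apply hl.2
    rw [← hlast]
    exact hc.symm
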